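/- arXiv:2210.10583 — 3 statements merged into one kernel-verified Lean document; each statement's English description precedes it below -/
import Mathlib

section
/- Let X be a finite set of points (m_i, n_i) with m_i, n_i > 0, and let H be the lower-right convex hull of X. Then for any m, n ≥ 0, the maximum of (m + m_i)/(n + n_i) over points of X equals the maximum over points of H. -/
/-- `H` is a lower-right convex hull of the finite point set `X`:
`H ⊆ X`, and a point `q ∈ X` is *not* in `H` iff it is dominated by some
other point `r ∈ H` (`q.1 ≤ r.1` and `q.2 ≥ r.2`), or it lies on or above
the segment joining two points `p, r ∈ H`. Points are `(m, n)` pairs. -/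
def IsLowerRightHull (X H : Finset (ℝ × ℝ)) : Prop :=
  H ⊆ X ∧
  ∀ q ∈ X, q ∉ H ↔
    ((∃ r ∈ H, q ≠ r ∧ q.1 ≤ r.1 ∧ r.2 ≤ q.2) ∨
     (∃ p ∈ H, ∃ r ∈ H, p.1 < q.1 ∧ q.1 < r.1 ∧
        (q.2 - p.2) * (r.1 - p.1) ≥ (r.2 - p.2) * (q.1 - p.1)))

theorem stmt0 (X H : Finset (ℝ × ℝ))
    (hpos : ∀ p ∈ X, 0 < p.1 ∧ 0 < p.2)
    (hhull : IsLowerRightHull X H)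
    (hX : X.Nonempty) (hH : H.Nonempty)
    (m n : ℝ) (hm : 0 ≤ m) (hn : 0 ≤ n) :
    X.sup' hX (fun p => (m + p.1) / (n + p.2)) =
    H.sup' hH (fun p => (m + p.1) / (n + p.2)) := by
  obtain ⟨hHX, hiff⟩ := hhull
  apply le_antisymm
  · apply Finset.sup'_le
    intro q hq
    by_cases hqH : q ∈ H
    · exact Finset.le_sup' (fun p => (m + p.1) / (n + p.2)) hqH
    · rcases (hiff q hq).mp hqH with ⟨r, hrH, -, h1, h2⟩ | ⟨p, hpH, r, hrH, h1, h2, h3⟩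
      · refine le_trans ?_ (Finset.le_sup' (fun p => (m + p.1) / (n + p.2)) hrH)
        have hq2 := (hpos q hq).2
        have hr2 := (hpos r (hHX hrH)).2
        have hr1 := (hpos r (hHX hrH)).1
        exact div_le_div₀ (by linarith) (by linarith) (by linarith) (by linarith)
      · set M := H.sup' hH (fun p => (m + p.1) / (n + p.2)) with hM
        have hpM : (m + p.1) / (n + p.2) ≤ M := Finset.le_sup' (fun p => (m + p.1) / (n + p.2)) hpH
        have hrM : (m + r.1) / (n + r.2) ≤ M := Finset.le_sup' (fun p => (m + p.1) / (n + p.2)) hrH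
        have hpX := hpos p (hHX hpH)
        have hrX := hpos r (hHX hrH)
        have hqX := hpos q hq
        have hdp : (0:ℝ) < n + p.2 := by linarith [hpX.2]
        have hdr : (0:ℝ) < n + r.2 := by linarith [hrX.2]
        have hdq : (0:ℝ) < n + q.2 := by linarith [hqX.2]
        have hM0 : 0 ≤ M := le_trans (div_nonneg (by linarith [hpX.1]) hdp.le) hpM
        have hp' : m + p.1 ≤ M * (n + p.2) := (div_le_iff₀ hdp).mp hpM
        have hr' : m + r.1 ≤ M * (n + r.2) := (div_le_iff₀ hdr).mp hrM
        show (m + q.1) / (n + q.2) ≤ M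
        rw [div_le_iff₀ hdq]
        nlinarith [mul_le_mul_of_nonneg_right hp' (le_of_lt (sub_pos.mpr h2)),
          mul_le_mul_of_nonneg_right hr' (le_of_lt (sub_pos.mpr h1)),
          mul_le_mul_of_nonneg_left h3 hM0,
          mul_nonneg hM0 (le_of_lt (sub_pos.mpr h1)),
          mul_nonneg hM0 (le_of_lt (sub_pos.mpr h2))]
  · exact Finset.sup'_le _ _ fun q hq => Finset.le_sup' (fun p => (m + p.1) / (n + p.2)) (hHX hq)
end

section
/- Let p, q, r be points with positive coordinates satisfying n_p < n_q < n_r and m_p < m_q < m_r, and fix m, n ≥ 0. Define s(a,b) = (m_b − m_a)/(n_b − n_a) and b(a,b) = (m_b·n_a − m_a·n_b)/(n_b − n_a). If (m + m_q)/(n + n_q) ≥ (m + m_p)/(n + n_p) and (m + m_q)/(n + n_q) ≥ (m + m_r)/(n + n_r), then n·s(q,r) + b(q,r) ≤ m ≤ n·s(p,q) + b(p,q). -/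
theorem stmt2 (mp np mq nq mr nr m n : ℝ)
    (hp : 0 < mp) (hp' : 0 < np) (hq : 0 < mq) (hq' : 0 < nq)
    (hr : 0 < mr) (hr' : 0 < nr)
    (hn1 : np < nq) (hn2 : nq < nr)
    (hm1 : mp < mq) (hm2 : mq < mr)
    (hm : 0 ≤ m) (hn : 0 ≤ n)
    (hoptp : (m + mp) / (n + np) ≤ (m + mq) / (n + nq))
    (hoptr : (m + mr) / (n + nr) ≤ (m + mq) / (n + nq)) :
    n * ((mr - mq) / (nr - nq)) + (mr * nq - mq * nr) / (nr - nq) ≤ m ∧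
    m ≤ n * ((mq - mp) / (nq - np)) + (mq * np - mp * nq) / (nq - np) := by
  have hpq : (0:ℝ) < n + np := by linarith
  have hqq : (0:ℝ) < n + nq := by linarith
  have hrq : (0:ℝ) < n + nr := by linarith
  have h1 := (div_le_div_iff₀ hpq hqq).mp hoptp
  have h2 := (div_le_div_iff₀ hrq hqq).mp hoptr
  have d1 : (0:ℝ) < nq - np := by linarith
  have d2 : (0:ℝ) < nr - nq := by linarith
  constructor
  · rw [show n * ((mr - mq) / (nr - nq)) + (mr * nq - mq * nr) / (nr - nq)
        = (n * (mr - mq) + (mr * nq - mq * nr)) / (nr - nq) from by ring,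
      div_le_iff₀ d2]
    nlinarith
  · rw [show n * ((mq - mp) / (nq - np)) + (mq * np - mp * nq) / (nq - np)
        = (n * (mq - mp) + (mq * np - mp * nq)) / (nq - np) from by ring,
      le_div_iff₀ d1]
    nlinarith
end

section
/- Let m, n ≥ 0 and let k = (m_k, n_k), p = (m_p, n_p), q = (m_q, n_q) be points with positive coordinates such that n_p < n_k < n_q, m_p < m_k < m_q, (n_q − n_k)/(m_q − m_k) ≤ (n_k − n_p)/(m_k − m_p), and (m + m_k)/(n + n_k) ≥ (m + m_p)/(n + n_p). Then (m + m_k)/(n + n_k) ≤ (m + m_q)/(n + n_q). -/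
theorem stmt12 (mk nk mp np mq nq m n : ℝ)
    (hmp : 0 < mp) (hnp : 0 < np) (hmk : 0 < mk) (hnk : 0 < nk)
    (hmq : 0 < mq) (hnq : 0 < nq)
    (hm : 0 ≤ m) (hn : 0 ≤ n)
    (hn1 : np < nk) (hn2 : nk < nq)
    (hm1 : mp < mk) (hm2 : mk < mq)
    (hslope : (nq - nk) / (mq - mk) ≤ (nk - np) / (mk - mp))
    (hbeat : (m + mp) / (n + np) ≤ (m + mk) / (n + nk)) :
    (m + mk) / (n + nk) ≤ (m + mq) / (n + nq) := by
  have dp : 0 < n + np := by linarith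
  have dk : 0 < n + nk := by linarith
  have dq : 0 < n + nq := by linarith
  have dmp : 0 < mk - mp := by linarith
  have dmq : 0 < mq - mk := by linarith
  rw [div_le_div_iff₀ dp dk] at hbeat
  rw [div_le_div_iff₀ dmq dmp] at hslope
  rw [div_le_div_iff₀ dk dq]
  nlinarith [mul_le_mul_of_nonneg_left hslope (by linarith : (0:ℝ) ≤ m + mk),
    mul_le_mul_of_nonneg_left hbeat dmq.le,
    mul_pos dmp dmq]
end
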